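/- For each window w_r and each 0 ≤ m' ≤ N/L−1, Z(w_r, m') = Σ_{k=0}^{N−1} α(k) β_r(k) e^{2πi m' k L / N}, where α(k) = (1/N) Σ_{n=0}^{N−1} |x(n)|² e^{−2πikn/N} and β_r(k) = (1/N) Σ_{n=0}^{N−1} |w_r(n)|² e^{−2πikn/N}. -/

import Mathlib

/-- Multiple-window short-time Fourier transform. -/
noncomputable def stft {N : ℕ} [NeZero N] (L : ℕ) (x w : ZMod N → ℂ) (m k : ℕ) : ℂ :=
  (N : ℂ)⁻¹ * ∑ n : ZMod N, x n * w (((L * m : ℕ) : ZMod N) - n) *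
    Complex.exp (-(2 * Real.pi * Complex.I * (k : ℂ) * (n.val : ℂ)) / (N : ℂ))

/-- DFT of the squared magnitudes of a vector: `(1/N) ∑_n |u(n)|² e^{-2πikn/N}`. -/
noncomputable def dftSq {N : ℕ} [NeZero N] (u : ZMod N → ℂ) (k : ℕ) : ℂ :=
  (N : ℂ)⁻¹ * ∑ n : ZMod N, (‖u n‖ ^ 2 : ℝ) *
    Complex.exp (-(2 * Real.pi * Complex.I * (k : ℂ) * (n.val : ℂ)) / (N : ℂ))

open Complex Finset

lemma exp_eq_one_iff' (N : ℕ) [NeZero N] (c : ℤ) :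
    Complex.exp (2 * Real.pi * Complex.I * (c : ℂ) / (N : ℂ)) = 1 ↔ (N : ℤ) ∣ c := by
  have hN : (N : ℂ) ≠ 0 := Nat.cast_ne_zero.mpr (NeZero.ne N)
  rw [Complex.exp_eq_one_iff]
  constructor
  · rintro ⟨n, hn⟩
    refine ⟨n, ?_⟩
    have h2 : (2 * Real.pi * Complex.I : ℂ) ≠ 0 := by
      simp [Real.pi_ne_zero, Complex.I_ne_zero]
    have : (c : ℂ) = n * N := by
      field_simp at hn
      exact mul_left_cancel₀ h2
        (by linear_combination (2 * Real.pi * Complex.I : ℂ) * hn : (2 * Real.pi * Complex.I : ℂ) * c = (2 * Real.pi * Complex.I) * (n * N))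
    have : (c : ℂ) = ((N * n : ℤ) : ℂ) := by push_cast; linear_combination this
    exact_mod_cast this
  · rintro ⟨n, rfl⟩
    exact ⟨n, by field_simp; push_cast; ring⟩

lemma ortho (N : ℕ) [NeZero N] (c : ℤ) :
    ∑ k ∈ Finset.range N, Complex.exp (2 * Real.pi * Complex.I * (k : ℂ) * (c : ℂ) / (N : ℂ))
      = if (N : ℤ) ∣ c then (N : ℂ) else 0 := by
  have hN : (N : ℂ) ≠ 0 := Nat.cast_ne_zero.mpr (NeZero.ne N)
  have hrw : ∀ k : ℕ, Complex.exp (2 * Real.pi * Complex.I * (k : ℂ) * (c : ℂ) / (N : ℂ))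
      = Complex.exp (2 * Real.pi * Complex.I * (c : ℂ) / (N : ℂ)) ^ k := by
    intro k
    rw [← Complex.exp_nat_mul]
    ring_nf
  simp only [hrw]
  by_cases h : (N : ℤ) ∣ c
  · rw [(exp_eq_one_iff' N c).mpr h]
    simp [h]
  · have hne : Complex.exp (2 * Real.pi * Complex.I * (c : ℂ) / (N : ℂ)) ≠ 1 :=
      fun hh => h ((exp_eq_one_iff' N c).mp hh)
    rw [geom_sum_eq hne]
    have hpow : Complex.exp (2 * Real.pi * Complex.I * (c : ℂ) / (N : ℂ)) ^ N = 1 := by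
      rw [← Complex.exp_nat_mul]
      have : (N : ℂ) * (2 * Real.pi * Complex.I * (c : ℂ) / (N : ℂ))
          = (c : ℂ) * (2 * Real.pi * Complex.I) := by field_simp
      rw [this]
      exact_mod_cast Complex.exp_int_mul_two_pi_mul_I c
    rw [hpow]
    simp [h]

lemma csq (z : ℂ) : ((‖z‖ ^ 2 : ℝ) : ℂ) = z * (starRingEnd ℂ) z := by
  rw [Complex.mul_conj]
  norm_cast
  rw [Complex.normSq_eq_norm_sq]

lemma dvd_iff_zmod (N : ℕ) [NeZero N] (n n' : ZMod N) :
    (N : ℤ) ∣ ((n'.val : ℤ) - (n.val : ℤ)) ↔ n' = n := by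
  rw [← ZMod.intCast_zmod_eq_zero_iff_dvd]
  push_cast
  simp [ZMod.natCast_val, ZMod.cast_id, sub_eq_zero]

lemma dvd_iff_zmod2 (N L m' : ℕ) [NeZero N] (n p : ZMod N) :
    (N : ℤ) ∣ ((m' * L : ℤ) - (n.val : ℤ) - (p.val : ℤ)) ↔ p = ((L * m' : ℕ) : ZMod N) - n := by
  rw [← ZMod.intCast_zmod_eq_zero_iff_dvd]
  push_cast
  simp only [ZMod.natCast_val, ZMod.cast_id]
  constructor
  · intro h
    have : (m' : ZMod N) * L - n = p := by linear_combination h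
    rw [← this]; ring
  · intro h
    rw [h]; ring

lemma sum_exp_swap (N : ℕ) [NeZero N] (A : ZMod N → ZMod N → ℂ) (d : ZMod N → ZMod N → ℤ) :
    ∑ k ∈ Finset.range N, ∑ n : ZMod N, ∑ p : ZMod N, A n p *
        Complex.exp (2 * Real.pi * Complex.I * (k : ℂ) * ((d n p : ℤ) : ℂ) / (N : ℂ))
      = ∑ n : ZMod N, ∑ p : ZMod N, A n p * (if (N : ℤ) ∣ d n p then (N : ℂ) else 0) := by
  rw [Finset.sum_comm]
  refine Finset.sum_congr rfl fun n _ => ?_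
  rw [Finset.sum_comm]
  refine Finset.sum_congr rfl fun p _ => ?_
  rw [← Finset.mul_sum, ortho]


/-- `Z(w, m') = ∑_{k} α(k) β(k) e^{2πi m' k L / N}` where `α`, `β` are the DFTs of
`|x|²` and `|w|²`. -/
theorem stmt5 (N L : ℕ) [NeZero N] (hL : 0 < L) (hdvd : L ∣ N)
    (w x : ZMod N → ℂ) (m' : ℕ) (hm' : m' < N / L) :
    ((∑ k ∈ Finset.range N, ‖stft L x w m' k‖ ^ 2 : ℝ) : ℂ) =
      ∑ k ∈ Finset.range N, dftSq x k * dftSq w k *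
        Complex.exp (2 * Real.pi * Complex.I * (m' : ℂ) * (k : ℂ) * (L : ℂ) / (N : ℂ)) := by
  have hN : (N : ℂ) ≠ 0 := Nat.cast_ne_zero.mpr (NeZero.ne N)
  set c : ZMod N := ((L * m' : ℕ) : ZMod N) with hc
  -- Per-k expansion of the left side
  have hconj : ∀ k : ℕ, (starRingEnd ℂ) (stft L x w m' k)
      = (N : ℂ)⁻¹ * ∑ n' : ZMod N, (starRingEnd ℂ) (x n') * (starRingEnd ℂ) (w (c - n')) *
          Complex.exp ((2 * Real.pi * Complex.I * (k : ℂ) * (n'.val : ℂ)) / (N : ℂ)) := by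
    intro k
    unfold stft
    rw [map_mul, map_sum]
    congr 1
    · simp
    · refine Finset.sum_congr rfl fun n' _ => ?_
      rw [map_mul, map_mul, ← Complex.exp_conj]
      congr 1
      simp only [map_div₀, map_neg, map_mul, Complex.conj_I, Complex.conj_ofReal,
        map_natCast, map_ofNat]
      ring
  have hLk : ∀ k : ℕ, ((‖stft L x w m' k‖ ^ 2 : ℝ) : ℂ)
      = (N : ℂ)⁻¹ * (N : ℂ)⁻¹ * ∑ n : ZMod N, ∑ n' : ZMod N,
          (x n * w (c - n) * ((starRingEnd ℂ) (x n') * (starRingEnd ℂ) (w (c - n')))) *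
          Complex.exp (2 * Real.pi * Complex.I * (k : ℂ) * (((n'.val : ℤ) - (n.val : ℤ) : ℤ) : ℂ) / (N : ℂ)) := by
    intro k
    rw [csq, hconj k]
    unfold stft
    rw [mul_mul_mul_comm, Finset.sum_mul_sum]
    congr 1
    refine Finset.sum_congr rfl fun n _ => Finset.sum_congr rfl fun n' _ => ?_
    rw [show ∀ a e b f : ℂ, (a * e) * (b * f) = (a * b) * (e * f) from fun a e b f => by ring,
      ← Complex.exp_add]
    congr 2
    push_cast
    ring
  -- Per-k expansion of the right side
  have hRk : ∀ k : ℕ, dftSq x k * dftSq w k *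
        Complex.exp (2 * Real.pi * Complex.I * (m' : ℂ) * (k : ℂ) * (L : ℂ) / (N : ℂ))
      = (N : ℂ)⁻¹ * (N : ℂ)⁻¹ * ∑ n : ZMod N, ∑ p : ZMod N,
          (((‖x n‖ ^ 2 : ℝ) : ℂ) * ((‖w p‖ ^ 2 : ℝ) : ℂ)) *
          Complex.exp (2 * Real.pi * Complex.I * (k : ℂ) *
            (((m' * L : ℤ) - (n.val : ℤ) - (p.val : ℤ) : ℤ) : ℂ) / (N : ℂ)) := by
    intro k
    unfold dftSq
    rw [show ∀ S T E C : ℂ, (C * S) * (C * T) * E = (C * C) * (S * T * E) from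
      fun S T E C => by ring, Finset.sum_mul_sum, Finset.sum_mul]
    congr 1
    refine Finset.sum_congr rfl fun n _ => ?_
    rw [Finset.sum_mul]
    refine Finset.sum_congr rfl fun p _ => ?_
    rw [show ∀ a e b f g : ℂ, ((a * e) * (b * f)) * g = (a * b) * (e * f * g) from
      fun a e b f g => by ring, ← Complex.exp_add, ← Complex.exp_add]
    congr 2
    push_cast
    ring
  -- Sum both sides over k and use orthogonality
  rw [Complex.ofReal_sum]
  simp only [hLk, hRk, ← Finset.mul_sum]
  rw [sum_exp_swap N (fun n n' => x n * w (c - n) *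
        ((starRingEnd ℂ) (x n') * (starRingEnd ℂ) (w (c - n'))))
      (fun n n' => (n'.val : ℤ) - (n.val : ℤ)),
    sum_exp_swap N (fun n p => ((‖x n‖ ^ 2 : ℝ) : ℂ) * ((‖w p‖ ^ 2 : ℝ) : ℂ))
      (fun n p => (m' * L : ℤ) - (n.val : ℤ) - (p.val : ℤ))]
  congr 1
  simp only [dvd_iff_zmod, dvd_iff_zmod2, mul_ite, mul_zero, Finset.sum_ite_eq',
    Finset.mem_univ, if_true]
  refine Finset.sum_congr rfl fun n _ => ?_
  rw [csq (x n), csq (w (c - n))]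
  ring
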